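/- Let m ≥ 3, n = 2m, and let a, b : Fin m → Fin n be injective maps with disjoint ranges covering Fin n (write i_l = a(l), j_l = b(l)). Consider the projection π sending x : Fin n → Fin n → ℝ to the vector of its entries x(u,v) over pairs u < v. Then the fence inequality f(x) ≤ 1 defines a facet of the projected linear ordering polytope π(P_n): namely, f(χ_r) ≤ 1 for every strict total order r on Fin n, and the affine span of the set { π(χ_r) : r a strict total order on Fin n with f(χ_r) = 1 } has dimension n(n−1)/2 − 1, where f(x) = 2·∑_{l} x(i_l, j_l) − ∑_{l} ∑_{q} x(i_l, j_q). -/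

import Mathlib

open scoped BigOperators

/-- A point of the linear ordering polytope relaxation `B_n`. -/
def IsBn {n : ℕ} (x : Fin n → Fin n → ℝ) : Prop :=
  (∀ i, x i i = 0) ∧
  (∀ i j : Fin n, i ≠ j → 0 ≤ x i j ∧ x i j ≤ 1) ∧
  (∀ i j : Fin n, i ≠ j → x i j + x j i = 1) ∧
  (∀ i j k : Fin n, i ≠ j → i ≠ k → j ≠ k →
    0 ≤ x i j + x j k - x i k ∧ x i j + x j k - x i k ≤ 1)

/-- A strict total order on `Fin n`: irreflexive, transitive and total. -/
def IsSTO {n : ℕ} (r : Fin n → Fin n → Prop) : Prop :=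
  (∀ i, ¬ r i i) ∧ (∀ i j k, r i j → r j k → r i k) ∧
  (∀ i j : Fin n, i ≠ j → r i j ∨ r j i)

open Classical in
/-- The incidence vector `χ_r` of a relation `r`. -/
noncomputable def chi {n : ℕ} (r : Fin n → Fin n → Prop) : Fin n → Fin n → ℝ :=
  fun i j => if r i j then 1 else 0

/-- The fence function `f(x) = 2·∑ l, x(a l, b l) − ∑ l, ∑ q, x(a l, b q)`. -/
noncomputable def fence {m n : ℕ} (a b : Fin m → Fin n)
    (x : Fin n → Fin n → ℝ) : ℝ :=
  2 * ∑ l, x (a l) (b l) - ∑ l, ∑ q, x (a l) (b q)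

/-- The projection of a matrix onto its entries over pairs `u < v`. -/
def proj {n : ℕ} (x : Fin n → Fin n → ℝ) :
    {p : Fin n × Fin n // p.1 < p.2} → ℝ :=
  fun p => x p.1.1 p.1.2

lemma fence_le_one {m : ℕ} (a b : Fin m → Fin (2*m)) (hab : ∀ l q, a l ≠ b q)
    {r : Fin (2*m) → Fin (2*m) → Prop} (hr : IsSTO r) : fence a b (chi r) ≤ 1 := by
  classical
  obtain ⟨hirr, htr, htot⟩ := hr
  set S := Finset.univ.filter (fun l => r (a l) (b l)) with hS
  set T := (Finset.univ ×ˢ Finset.univ).filter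
    (fun lq : Fin m × Fin m => lq.1 ≠ lq.2 ∧ r (a lq.1) (b lq.2)) with hT
  have h1 : ∑ l, chi r (a l) (b l) = (S.card : ℝ) := by
    have : ∀ l, chi r (a l) (b l) = if r (a l) (b l) then (1:ℝ) else 0 := by
      intro l; simp [chi]
    simp_rw [this]
    rw [Finset.sum_boole]
  have h2 : ∑ l, ∑ q, chi r (a l) (b q) = (S.card : ℝ) + (T.card : ℝ) := by
    have : ∀ l q, chi r (a l) (b q) = if r (a l) (b q) then (1:ℝ) else 0 := by
      intro l q; simp [chi]
    simp_rw [this]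
    rw [show (∑ x : Fin m, ∑ y : Fin m, if r (a x) (b y) then (1:ℝ) else 0)
        = ∑ lq : Fin m × Fin m, if r (a lq.1) (b lq.2) then (1:ℝ) else 0
      from (Fintype.sum_prod_type (fun lq : Fin m × Fin m => if r (a lq.1) (b lq.2) then (1:ℝ) else 0)).symm]
    rw [Finset.sum_boole]
    have hU : (Finset.univ.filter fun lq : Fin m × Fin m => r (a lq.1) (b lq.2)).card
        = S.card + T.card := by
      rw [← Finset.card_filter_add_card_filter_not
        (p := fun lq : Fin m × Fin m => lq.1 = lq.2)]
      congr 1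
      · -- diag part has card S.card
        apply Finset.card_nbij (i := fun lq => lq.1)
        · intro x hx; simp at hx ⊢; rcases hx with ⟨hr', he⟩
          rw [hS]; simp; rw [← he] at hr'; exact hr'
        · intro x hx y hy hxy
          simp at hx hy
          obtain ⟨_, hx2⟩ := hx; obtain ⟨_, hy2⟩ := hy
          ext
          · exact congrArg Fin.val hxy
          · rw [← hx2, ← hy2]; exact congrArg Fin.val hxy
        · intro y hy
          rw [hS] at hy; simp at hy
          refine ⟨(y, y), by simp [hy], rfl⟩
      · rw [hT]
        congr 1
        ext lq
        simp [Finset.mem_filter]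
        tauto
    rw [hU]; push_cast; ring
  have h3 : S.card ≤ T.card + 1 := by
    rcases Finset.eq_empty_or_nonempty S with he | ⟨l₀, hl₀⟩
    · simp [he]
    · have hinj : ∀ x ∈ S.erase l₀,
        (if r (a x) (b l₀) then (x, l₀) else (l₀, x)) ∈ T := by
        intro x hx
        have hxl : x ≠ l₀ := (Finset.mem_erase.mp hx).1
        have hxS : r (a x) (b x) := by
          have := (Finset.mem_erase.mp hx).2; rw [hS] at this; simpa using this
        have hl₀S : r (a l₀) (b l₀) := by rw [hS] at hl₀; simpa using hl₀
        by_cases hc : r (a x) (b l₀)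
        · simp only [if_pos hc, hT, Finset.mem_filter]
          exact ⟨by simp, hxl, hc⟩
        · have hc2 : r (a l₀) (b x) := by
            by_contra hc2
            have t1 : r (b l₀) (a x) := ((htot _ _ (hab x l₀).symm).resolve_right hc)
            have t2 : r (b x) (a l₀) := ((htot _ _ (hab l₀ x).symm).resolve_right hc2)
            exact hirr _ (htr _ _ _ (htr _ _ _ (htr _ _ _ hxS t2) hl₀S) t1)
          simp only [if_neg hc, hT, Finset.mem_filter]
          exact ⟨by simp, hxl.symm, hc2⟩
      have hcard := Finset.card_le_card_of_injOn _ hinj ?_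
      · have : (S.erase l₀).card = S.card - 1 := Finset.card_erase_of_mem hl₀
        omega
      · intro x hx y hy hxy
        have hxl : x ≠ l₀ := (Finset.mem_erase.mp hx).1
        have hyl : y ≠ l₀ := (Finset.mem_erase.mp hy).1
        by_cases h1 : r (a x) (b l₀) <;> by_cases h2 : r (a y) (b l₀) <;>
          simp [h1, h2, Prod.ext_iff] at hxy <;> tauto
  rw [fence, h1, h2]
  have : (S.card : ℝ) ≤ (T.card : ℝ) + 1 := by exact_mod_cast h3
  linarith

open scoped BigOperators




/-- Order induced by a rank function. -/
def rel {n : ℕ} (ρ : Fin n → ℕ) : Fin n → Fin n → Prop := fun u v => ρ u < ρ v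

lemma isSTO_rel {n : ℕ} {ρ : Fin n → ℕ} (hρ : Function.Injective ρ) : IsSTO (rel ρ) := by
  refine ⟨fun i => lt_irrefl _, fun i j k h h' => lt_trans h h', fun i j hne => ?_⟩
  have : ρ i ≠ ρ j := fun h => hne (hρ h)
  rcases lt_or_gt_of_ne this with h | h
  · exact Or.inl h
  · exact Or.inr h

lemma chi_asym {n : ℕ} {r : Fin n → Fin n → Prop} (hr : IsSTO r) {i j : Fin n} (hij : i ≠ j) :
    chi r j i = 1 - chi r i j := by
  obtain ⟨hirr, htr, htot⟩ := hr
  unfold chi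
  by_cases h : r i j
  · have : ¬ r j i := fun h' => hirr i (htr _ _ _ h h')
    simp [h, this]
  · have : r j i := (htot i j hij).resolve_left h
    simp [h, this]

def rk {m : ℕ} (a b : Fin m → Fin (2*m)) (f g : Fin m → ℕ) : Fin (2*m) → ℕ :=
  fun u => (∑ l, if u = a l then f l else 0) + (∑ l, if u = b l then g l else 0)

section
variable {m : ℕ} {a b : Fin m → Fin (2*m)}

lemma rk_a (ha : Function.Injective a) (hab : ∀ l q, a l ≠ b q) (f g : Fin m → ℕ) (l : Fin m) :
    rk a b f g (a l) = f l := by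
  unfold rk
  have h1 : (∑ l', if a l = a l' then f l' else 0) = f l := by
    simp [ha.eq_iff]
  have h2 : (∑ l', if a l = b l' then g l' else 0) = 0 := by
    have : ∀ l', a l ≠ b l' := fun l' => hab l l'
    simp [this]
  rw [h1, h2, add_zero]

lemma rk_b (hb : Function.Injective b) (hab : ∀ l q, a l ≠ b q) (f g : Fin m → ℕ) (q : Fin m) :
    rk a b f g (b q) = g q := by
  unfold rk
  have h1 : (∑ l', if b q = a l' then f l' else 0) = 0 := by
    have : ∀ l', b q ≠ a l' := fun l' h => hab l' q h.symm
    simp [this]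
  have h2 : (∑ l', if b q = b l' then g l' else 0) = g q := by
    simp [hb.eq_iff]
  rw [h1, h2, zero_add]

lemma rk_inj (ha : Function.Injective a) (hb : Function.Injective b)
    (hab : ∀ l q, a l ≠ b q) (hcov : ∀ u : Fin (2*m), (∃ l, u = a l) ∨ (∃ l, u = b l))
    {f g : Fin m → ℕ} (hf : Function.Injective f) (hg : Function.Injective g)
    (hfg : ∀ l q, f l ≠ g q) : Function.Injective (rk a b f g) := by
  intro u v huv
  rcases hcov u with ⟨l, rfl⟩ | ⟨l, rfl⟩ <;> rcases hcov v with ⟨q, rfl⟩ | ⟨q, rfl⟩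
  · rw [rk_a ha hab, rk_a ha hab] at huv; exact congrArg a (hf huv)
  · rw [rk_a ha hab, rk_b hb hab] at huv; exact absurd huv (hfg l q)
  · rw [rk_b hb hab, rk_a ha hab] at huv; exact absurd huv.symm (hfg q l)
  · rw [rk_b hb hab, rk_b hb hab] at huv; exact congrArg b (hg huv)

lemma chi_rel_ab (ha : Function.Injective a) (hb : Function.Injective b)
    (hab : ∀ l q, a l ≠ b q) (f g : Fin m → ℕ) (l q : Fin m) :
    chi (rel (rk a b f g)) (a l) (b q) = if f l < g q then 1 else 0 := by
  have h1 := rk_a (b := b) ha hab f g l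
  have h2 := rk_b (a := a) hb hab f g q
  simp only [chi, rel, h1, h2]

end

/-- Oriented pair coordinate. -/
def Pr {m : ℕ} (a b : Fin m → Fin (2*m)) (hab : ∀ l q, a l ≠ b q) (l q : Fin m) :
    {p : Fin (2*m) × Fin (2*m) // p.1 < p.2} :=
  if h : a l < b q then ⟨(a l, b q), h⟩
  else ⟨(b q, a l), (Ne.symm (hab l q)).lt_of_le (not_lt.mp h)⟩

lemma proj_sub_Pr {m : ℕ} {a b : Fin m → Fin (2*m)} (hab : ∀ l q, a l ≠ b q)
    {r₁ r₂ : Fin (2*m) → Fin (2*m) → Prop} (h₁ : IsSTO r₁) (h₂ : IsSTO r₂) (l q : Fin m) :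
    proj (chi r₁) (Pr a b hab l q) - proj (chi r₂) (Pr a b hab l q)
      = (if a l < b q then (1:ℝ) else -1) * (chi r₁ (a l) (b q) - chi r₂ (a l) (b q)) := by
  unfold Pr
  split_ifs with h
  · simp [proj]
  · have e1 := chi_asym h₁ (hab l q)
    have e2 := chi_asym h₂ (hab l q)
    simp only [proj]
    rw [e1, e2]; ring

lemma swap_chi {n : ℕ} (ρ₁ ρ₂ : Fin n → ℕ) (u₀ v₀ : Fin n)
    (h1 : ρ₁ v₀ = ρ₁ u₀ + 1) (h2 : ρ₂ u₀ = ρ₁ v₀) (h3 : ρ₂ v₀ = ρ₁ u₀)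
    (h4 : ∀ w, w ≠ u₀ → w ≠ v₀ → ρ₂ w = ρ₁ w ∧ (ρ₁ w < ρ₁ u₀ ∨ ρ₁ u₀ + 1 < ρ₁ w)) :
    ∀ i j, ¬(i = u₀ ∧ j = v₀) → ¬(i = v₀ ∧ j = u₀) → ((ρ₁ i < ρ₁ j) ↔ (ρ₂ i < ρ₂ j)) := by
  intro i j hij hji
  rcases eq_or_ne i u₀ with rfl | hiu
  · rcases eq_or_ne j v₀ with rfl | hjv
    · exact absurd ⟨rfl, rfl⟩ hij
    · rcases eq_or_ne j i with rfl | hju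
      · omega
      · have := h4 j hju hjv; omega
  · rcases eq_or_ne i v₀ with rfl | hiv
    · rcases eq_or_ne j u₀ with rfl | hju
      · exact absurd ⟨rfl, rfl⟩ hji
      · rcases eq_or_ne j i with rfl | hjv
        · omega
        · have := h4 j hju hjv; omega
    · have Hi := h4 i hiu hiv
      rcases eq_or_ne j u₀ with rfl | hju
      · omega
      · rcases eq_or_ne j v₀ with rfl | hjv
        · omega
        · have Hj := h4 j hju hjv; omega

def sPair {n : ℕ} (u v : Fin n) (h : u ≠ v) : {p : Fin n × Fin n // p.1 < p.2} :=
  if hlt : u < v then ⟨(u, v), hlt⟩ else ⟨(v, u), (Ne.symm h).lt_of_le (not_lt.mp hlt)⟩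

lemma swap_proj {n : ℕ} (ρ₁ ρ₂ : Fin n → ℕ) (u₀ v₀ : Fin n) (hne : u₀ ≠ v₀)
    (h1 : ρ₁ v₀ = ρ₁ u₀ + 1) (h2 : ρ₂ u₀ = ρ₁ v₀) (h3 : ρ₂ v₀ = ρ₁ u₀)
    (h4 : ∀ w, w ≠ u₀ → w ≠ v₀ → ρ₂ w = ρ₁ w ∧ (ρ₁ w < ρ₁ u₀ ∨ ρ₁ u₀ + 1 < ρ₁ w)) :
    ∃ ε : ℝ, ε ≠ 0 ∧
      (proj (chi (rel ρ₁)) - proj (chi (rel ρ₂)))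
        = (fun p => if p = sPair u₀ v₀ hne then ε else 0) := by
  classical
  refine ⟨if u₀ < v₀ then 1 else -1, by split_ifs <;> norm_num, ?_⟩
  funext p
  obtain ⟨⟨i, j⟩, hij⟩ := p
  by_cases hp : (⟨(i, j), hij⟩ : {p : Fin n × Fin n // p.1 < p.2}) = sPair u₀ v₀ hne
  · rw [if_pos hp]
    unfold sPair at hp
    split_ifs at hp with hlt
    · have hij' : (i, j) = (u₀, v₀) := congrArg Subtype.val hp
      rw [Prod.mk.injEq] at hij'
      obtain ⟨rfl, rfl⟩ := hij'
      simp only [Pi.sub_apply, proj, chi, rel]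
      simp only [show ρ₁ i < ρ₁ j by omega, show ¬ ρ₂ i < ρ₂ j by omega, hlt, if_true, if_false]
      norm_num
    · have hij' : (i, j) = (v₀, u₀) := congrArg Subtype.val hp
      rw [Prod.mk.injEq] at hij'
      obtain ⟨rfl, rfl⟩ := hij'
      simp only [Pi.sub_apply, proj, chi, rel]
      simp only [show ¬ ρ₁ i < ρ₁ j by omega, show ρ₂ i < ρ₂ j by omega, hlt, if_true, if_false]
      norm_num
  · rw [if_neg hp]
    have hne1 : ¬(i = u₀ ∧ j = v₀) := by
      rintro ⟨rfl, rfl⟩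
      apply hp; unfold sPair; rw [dif_pos hij]
    have hne2 : ¬(i = v₀ ∧ j = u₀) := by
      rintro ⟨rfl, rfl⟩
      apply hp; unfold sPair; rw [dif_neg (asymm hij)]
    have hiff := swap_chi ρ₁ ρ₂ u₀ v₀ h1 h2 h3 h4 i j hne1 hne2
    simp only [Pi.sub_apply, proj, chi, rel]
    by_cases hc : ρ₁ i < ρ₁ j
    · simp only [hc, hiff.mp hc, if_true]; ring
    · simp only [hc, show ¬ ρ₂ i < ρ₂ j from fun h => hc (hiff.mpr h), if_false]; ring
open scoped BigOperators

-- order family definitions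
def fA {m : ℕ} (l0 : Fin m) : Fin m → ℕ := fun l => if l = l0 then m else 2*m+2+l.val
def gA {m : ℕ} (l0 : Fin m) : Fin m → ℕ := fun q => if q = l0 then m+1 else q.val
def fB {m : ℕ} (l0 q0 : Fin m) : Fin m → ℕ :=
  fun l => if l = l0 then m+1 else if l = q0 then m+3 else 2*m+5+l.val
def gB {m : ℕ} (l0 q0 : Fin m) : Fin m → ℕ :=
  fun q => if q = l0 then m+2 else if q = q0 then m+4 else q.val
def fSa {m : ℕ} (l0 l1 q1 : Fin m) (s : Bool) : Fin m → ℕ :=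
  fun x => if x = l0 then m else if x = l1 then (if s then 2*m+3 else 2*m+2)
    else if x = q1 then (if s then 2*m+2 else 2*m+3) else 2*m+4+x.val
def fSb {m : ℕ} (l0 : Fin m) : Fin m → ℕ := fun x => if x = l0 then m+2 else 2*m+4+x.val
def gSb {m : ℕ} (l0 l1 q1 : Fin m) (s : Bool) : Fin m → ℕ :=
  fun y => if y = l1 then (if s then 1 else 0) else if y = q1 then (if s then 0 else 1)
    else if y = l0 then m+3 else 2+y.val

def pick {m : ℕ} (hm : 3 ≤ m) (x y : Fin m) : Fin m :=
  if x ≠ ⟨0, by omega⟩ ∧ y ≠ ⟨0, by omega⟩ then ⟨0, by omega⟩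
  else if x ≠ ⟨1, by omega⟩ ∧ y ≠ ⟨1, by omega⟩ then ⟨1, by omega⟩
  else ⟨2, by omega⟩

lemma pick_ne {m : ℕ} (hm : 3 ≤ m) (x y : Fin m) : pick hm x y ≠ x ∧ pick hm x y ≠ y := by
  unfold pick
  split_ifs with h1 h2 <;> constructor <;> (simp only [Fin.ext_iff, not_and, ne_eq] at *) <;> omega

section
variable {m : ℕ}

-- injectivity and cross conditions
lemma fA_inj (l0 : Fin m) : Function.Injective (fA l0) := by
  intro x y h
  have hx := x.isLt; have hy := y.isLt
  simp only [fA] at h; split_ifs at h <;> (simp only [Fin.ext_iff, not_and, ne_eq] at *) <;> omega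

lemma gA_inj (l0 : Fin m) : Function.Injective (gA l0) := by
  intro x y h
  have hx := x.isLt; have hy := y.isLt
  simp only [gA] at h; split_ifs at h <;> (simp only [Fin.ext_iff, not_and, ne_eq] at *) <;> omega

lemma fgA (l0 : Fin m) : ∀ l q, fA l0 l ≠ gA l0 q := by
  intro l q
  have hl := l.isLt; have hq := q.isLt
  simp only [fA, gA]; split_ifs <;> omega

lemma ltA (l0 l q : Fin m) : fA l0 l < gA l0 q ↔ (l = l0 ∧ q = l0) := by
  have hl := l.isLt; have hq := q.isLt
  simp only [fA, gA]; split_ifs <;> (simp only [Fin.ext_iff, not_and, ne_eq] at *) <;> omega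

lemma fB_inj {l0 q0 : Fin m} (h : l0 ≠ q0) : Function.Injective (fB l0 q0) := by
  intro x y hxy
  have hx := x.isLt; have hy := y.isLt
  simp only [fB] at hxy; split_ifs at hxy <;> (simp only [Fin.ext_iff, not_and, ne_eq] at *) <;> omega

lemma gB_inj {l0 q0 : Fin m} (h : l0 ≠ q0) : Function.Injective (gB l0 q0) := by
  intro x y hxy
  have hx := x.isLt; have hy := y.isLt
  simp only [gB] at hxy; split_ifs at hxy <;> (simp only [Fin.ext_iff, not_and, ne_eq] at *) <;> omega

lemma fgB {l0 q0 : Fin m} (h : l0 ≠ q0) : ∀ l q, fB l0 q0 l ≠ gB l0 q0 q := by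
  intro l q
  have hl := l.isLt; have hq := q.isLt
  simp only [fB, gB]; split_ifs <;> omega

lemma ltB {l0 q0 : Fin m} (h : l0 ≠ q0) (l q : Fin m) :
    fB l0 q0 l < gB l0 q0 q ↔ ((l = l0 ∧ q = l0) ∨ (l = l0 ∧ q = q0) ∨ (l = q0 ∧ q = q0)) := by
  have hl := l.isLt; have hq := q.isLt
  simp only [fB, gB]; split_ifs <;> (simp only [Fin.ext_iff, not_and, ne_eq] at *) <;> omega

lemma fSa_inj (l0 l1 q1 : Fin m) (s : Bool) : Function.Injective (fSa l0 l1 q1 s) := by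
  intro x y hxy
  have hx := x.isLt; have hy := y.isLt
  simp only [fSa] at hxy
  cases s <;> split_ifs at hxy <;> (simp only [Fin.ext_iff, not_and, ne_eq] at *) <;> omega

lemma fgSa (l0 l1 q1 : Fin m) (s : Bool) : ∀ l q, fSa l0 l1 q1 s l ≠ gA l0 q := by
  intro l q
  have hl := l.isLt; have hq := q.isLt
  simp only [fSa, gA]; cases s <;> split_ifs <;> omega

lemma ltSa (l0 l1 q1 : Fin m) (s : Bool) (l q : Fin m) :
    fSa l0 l1 q1 s l < gA l0 q ↔ (l = l0 ∧ q = l0) := by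
  have hl := l.isLt; have hq := q.isLt
  simp only [fSa, gA]; cases s <;> split_ifs <;> (simp only [Fin.ext_iff, not_and, ne_eq] at *) <;> omega

lemma fSb_inj (l0 : Fin m) : Function.Injective (fSb l0) := by
  intro x y hxy
  have hx := x.isLt; have hy := y.isLt
  simp only [fSb] at hxy; split_ifs at hxy <;> (simp only [Fin.ext_iff, not_and, ne_eq] at *) <;> omega

lemma gSb_inj {l0 l1 q1 : Fin m} (h3 : l1 ≠ q1) (s : Bool) :
    Function.Injective (gSb l0 l1 q1 s) := by
  intro x y hxy
  have hx := x.isLt; have hy := y.isLt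
  simp only [gSb] at hxy
  cases s <;> split_ifs at hxy <;> (simp only [Fin.ext_iff, not_and, ne_eq] at *) <;> omega

lemma fgSb {l0 l1 q1 : Fin m} (s : Bool) : ∀ l q, fSb l0 l ≠ gSb l0 l1 q1 s q := by
  intro l q
  have hl := l.isLt; have hq := q.isLt
  simp only [fSb, gSb]; cases s <;> split_ifs <;> omega

lemma ltSb {l0 l1 q1 : Fin m} (h1 : l0 ≠ l1) (h2 : l0 ≠ q1) (s : Bool) (l q : Fin m) :
    fSb l0 l < gSb l0 l1 q1 s q ↔ (l = l0 ∧ q = l0) := by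
  have hl := l.isLt; have hq := q.isLt
  simp only [fSb, gSb]; cases s <;> split_ifs <;> (simp only [Fin.ext_iff, not_and, ne_eq] at *) <;> omega

end

section
variable {m : ℕ} {a b : Fin m → Fin (2*m)}

lemma fence_ord (ha : Function.Injective a) (hb : Function.Injective b)
    (hab : ∀ l q, a l ≠ b q) (f g : Fin m → ℕ) :
    fence a b (chi (rel (rk a b f g)))
      = 2 * (∑ l, if f l < g l then (1:ℝ) else 0)
        - ∑ l, ∑ q, if f l < g q then (1:ℝ) else 0 := by
  unfold fence
  simp_rw [chi_rel_ab ha hb hab]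

lemma sum_diag_ind (l0 : Fin m) : (∑ l : Fin m, if l = l0 ∧ l = l0 then (1:ℝ) else 0) = 1 := by
  simp

lemma sum_double_ind (l0 : Fin m) :
    (∑ l : Fin m, ∑ q : Fin m, if l = l0 ∧ q = l0 then (1:ℝ) else 0) = 1 := by
  have h : ∀ l : Fin m, (∑ q : Fin m, if l = l0 ∧ q = l0 then (1:ℝ) else 0)
      = if l = l0 then 1 else 0 := by
    intro l
    by_cases h : l = l0
    · subst h; simp
    · simp [h]
  simp_rw [h]; simp

lemma fenceA (ha : Function.Injective a) (hb : Function.Injective b)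
    (hab : ∀ l q, a l ≠ b q) (l0 : Fin m) :
    fence a b (chi (rel (rk a b (fA l0) (gA l0)))) = 1 := by
  rw [fence_ord ha hb hab]
  simp_rw [ltA]
  rw [sum_diag_ind, sum_double_ind]; norm_num

lemma fenceSa (ha : Function.Injective a) (hb : Function.Injective b)
    (hab : ∀ l q, a l ≠ b q) (l0 l1 q1 : Fin m) (s : Bool) :
    fence a b (chi (rel (rk a b (fSa l0 l1 q1 s) (gA l0)))) = 1 := by
  rw [fence_ord ha hb hab]
  simp_rw [ltSa]
  rw [sum_diag_ind, sum_double_ind]; norm_num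

lemma fenceSb (ha : Function.Injective a) (hb : Function.Injective b)
    (hab : ∀ l q, a l ≠ b q) {l0 l1 q1 : Fin m} (h1 : l0 ≠ l1) (h2 : l0 ≠ q1) (s : Bool) :
    fence a b (chi (rel (rk a b (fSb l0) (gSb l0 l1 q1 s)))) = 1 := by
  rw [fence_ord ha hb hab]
  simp_rw [ltSb h1 h2]
  rw [sum_diag_ind, sum_double_ind]; norm_num

lemma fenceB (ha : Function.Injective a) (hb : Function.Injective b)
    (hab : ∀ l q, a l ≠ b q) {l0 q0 : Fin m} (hne : l0 ≠ q0) :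
    fence a b (chi (rel (rk a b (fB l0 q0) (gB l0 q0)))) = 1 := by
  rw [fence_ord ha hb hab]
  simp_rw [ltB hne]
  have hdiag : (∑ l : Fin m, if ((l = l0 ∧ l = l0) ∨ (l = l0 ∧ l = q0) ∨ (l = q0 ∧ l = q0))
      then (1:ℝ) else 0) = 2 := by
    have h : ∀ l : Fin m, (if ((l = l0 ∧ l = l0) ∨ (l = l0 ∧ l = q0) ∨ (l = q0 ∧ l = q0))
        then (1:ℝ) else 0) = (if l = l0 then 1 else 0) + (if l = q0 then 1 else 0) := by
      intro l
      by_cases e1 : l = l0 <;> by_cases e2 : l = q0 <;> simp_all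
    simp_rw [h, Finset.sum_add_distrib]
    simp
    norm_num
  have hdouble : (∑ l : Fin m, ∑ q : Fin m,
      if ((l = l0 ∧ q = l0) ∨ (l = l0 ∧ q = q0) ∨ (l = q0 ∧ q = q0)) then (1:ℝ) else 0) = 3 := by
    have h : ∀ l q : Fin m, (if ((l = l0 ∧ q = l0) ∨ (l = l0 ∧ q = q0) ∨ (l = q0 ∧ q = q0))
        then (1:ℝ) else 0)
        = (if l = l0 ∧ q = l0 then 1 else 0) + (if l = l0 ∧ q = q0 then 1 else 0)
          + (if l = q0 ∧ q = q0 then 1 else 0) := by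
      intro l q
      by_cases e1 : l = l0 <;> by_cases e2 : l = q0 <;> by_cases e3 : q = l0 <;>
        by_cases e4 : q = q0 <;> simp_all
    simp_rw [h, Finset.sum_add_distrib]
    have k1 : ∀ lx qx : Fin m, (∑ l : Fin m, ∑ q : Fin m,
        if l = lx ∧ q = qx then (1:ℝ) else 0) = 1 := by
      intro lx qx
      have h2 : ∀ l : Fin m, (∑ q : Fin m, if l = lx ∧ q = qx then (1:ℝ) else 0)
          = if l = lx then 1 else 0 := by
        intro l
        by_cases h : l = lx
        · subst h; simp
        · simp [h]
      simp_rw [h2]; simp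
    rw [k1, k1, k1]; norm_num
  rw [hdiag, hdouble]; norm_num

end

def tcoef {m : ℕ} (l q : Fin m) : ℝ := if l = q then 1 else -1

def scoef {m : ℕ} (a b : Fin m → Fin (2*m)) (l q : Fin m) : ℝ := if a l < b q then 1 else -1
def kcoef {m : ℕ} (a b : Fin m → Fin (2*m)) (l q : Fin m) : ℝ := if a l < b q then 0 else 1

noncomputable def Lmap {m : ℕ} (a b : Fin m → Fin (2*m)) (hab : ∀ l q, a l ≠ b q) :
    ({p : Fin (2*m) × Fin (2*m) // p.1 < p.2} → ℝ) →ₗ[ℝ] ℝ :=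
  ∑ l, ∑ q, (tcoef l q * scoef a b l q) • (LinearMap.proj (Pr a b hab l q))

section
variable {m : ℕ} {a b : Fin m → Fin (2*m)}

lemma Lmap_apply (hab : ∀ l q, a l ≠ b q) (y : {p : Fin (2*m) × Fin (2*m) // p.1 < p.2} → ℝ) :
    Lmap a b hab y = ∑ l, ∑ q, (tcoef l q * scoef a b l q) * y (Pr a b hab l q) := by
  simp [Lmap, LinearMap.sum_apply, LinearMap.smul_apply, LinearMap.proj_apply, smul_eq_mul]

lemma fence_eq_sum_t (r : Fin (2*m) → Fin (2*m) → Prop) :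
    fence a b (chi r) = ∑ l, ∑ q, tcoef l q * chi r (a l) (b q) := by
  have h1 : ∀ l, (∑ q, tcoef l q * chi r (a l) (b q))
      = 2 * chi r (a l) (b l) - ∑ q, chi r (a l) (b q) := by
    intro l
    have key : ∀ q, tcoef l q * chi r (a l) (b q)
        = (if q = l then (2 * chi r (a l) (b q)) else 0) - chi r (a l) (b q) := by
      intro q
      unfold tcoef
      by_cases h : l = q
      · subst h; simp; ring
      · simp [h, Ne.symm h]
    simp_rw [key, Finset.sum_sub_distrib]
    rw [Finset.sum_ite_eq' Finset.univ l (fun q => 2 * chi r (a l) (b q))]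
    simp
  simp_rw [h1, Finset.sum_sub_distrib, ← Finset.mul_sum]
  unfold fence
  ring

lemma Lmap_chi (hab : ∀ l q, a l ≠ b q)
    {r : Fin (2*m) → Fin (2*m) → Prop} (hr : IsSTO r) :
    Lmap a b hab (proj (chi r))
      = fence a b (chi r) - ∑ l, ∑ q, tcoef l q * kcoef a b l q := by
  rw [Lmap_apply, fence_eq_sum_t]
  have key : ∀ l q, tcoef l q * scoef a b l q * proj (chi r) (Pr a b hab l q)
      = tcoef l q * chi r (a l) (b q) - tcoef l q * kcoef a b l q := by
    intro l q
    unfold scoef kcoef Pr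
    split_ifs with h
    · simp [proj]
    · have hasym := chi_asym hr (hab l q)
      simp only [proj]
      rw [hasym]; ring
  simp_rw [key, Finset.sum_sub_distrib]

lemma Pr_inj (ha : Function.Injective a) (hb : Function.Injective b)
    (hab : ∀ l q, a l ≠ b q) {l q l' q' : Fin m}
    (h : Pr a b hab l q = Pr a b hab l' q') : l = l' ∧ q = q' := by
  unfold Pr at h
  have hv := congrArg Subtype.val h
  split_ifs at hv <;> rw [Prod.mk.injEq] at hv <;> obtain ⟨e1, e2⟩ := hv <;>
    first
      | exact ⟨ha e1, hb e2⟩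
      | exact ⟨ha e2, hb e1⟩
      | exact absurd e1 (hab _ _)
      | exact absurd e2 (hab _ _)
      | exact absurd e1.symm (hab _ _)
      | exact absurd e2.symm (hab _ _)

lemma sum_double_ind' (l0 q0 : Fin m) (F : Fin m → Fin m → ℝ) :
    (∑ l : Fin m, ∑ q : Fin m, if l = l0 ∧ q = q0 then F l q else 0) = F l0 q0 := by
  have h : ∀ l : Fin m, (∑ q : Fin m, if l = l0 ∧ q = q0 then F l q else 0)
      = if l = l0 then F l q0 else 0 := by
    intro l
    by_cases hh : l = l0
    · subst hh; simp
    · simp [hh]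
  simp_rw [h]
  simp

lemma Lmap_single (ha : Function.Injective a) (hb : Function.Injective b)
    (hab : ∀ l q, a l ≠ b q) (l0 q0 : Fin m) :
    Lmap a b hab (fun p => if p = Pr a b hab l0 q0 then (1:ℝ) else 0)
      = tcoef l0 q0 * scoef a b l0 q0 := by
  rw [Lmap_apply]
  have key : ∀ l q, (tcoef l q * scoef a b l q)
        * (if Pr a b hab l q = Pr a b hab l0 q0 then (1:ℝ) else 0)
      = if l = l0 ∧ q = q0 then tcoef l q * scoef a b l q else 0 := by
    intro l q
    by_cases h : Pr a b hab l q = Pr a b hab l0 q0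
    · obtain ⟨rfl, rfl⟩ := Pr_inj ha hb hab h
      simp
    · rw [if_neg h, if_neg (by rintro ⟨rfl, rfl⟩; exact h rfl)]
      ring
  simp_rw [key]
  exact sum_double_ind' l0 q0 _

lemma Lmap_ne_zero (hm : 3 ≤ m) (ha : Function.Injective a) (hb : Function.Injective b)
    (hab : ∀ l q, a l ≠ b q) : Lmap a b hab ≠ 0 := by
  intro h0
  have h1 := Lmap_single ha hb hab ⟨0, by omega⟩ ⟨0, by omega⟩
  rw [h0] at h1
  simp only [LinearMap.zero_apply] at h1
  unfold tcoef scoef at h1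
  split_ifs at h1 <;> norm_num at h1

lemma finrank_ker_Lmap (hm : 3 ≤ m) (ha : Function.Injective a) (hb : Function.Injective b)
    (hab : ∀ l q, a l ≠ b q) :
    Module.finrank ℝ (LinearMap.ker (Lmap a b hab))
      = Fintype.card {p : Fin (2*m) × Fin (2*m) // p.1 < p.2} - 1 := by
  classical
  obtain ⟨x, hx⟩ : ∃ x, Lmap a b hab x ≠ 0 := by
    by_contra hc
    push_neg at hc
    exact Lmap_ne_zero hm ha hb hab (LinearMap.ext fun y => by rw [hc y]; rfl)
  have hsurj : Function.Surjective (Lmap a b hab) := by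
    intro c
    refine ⟨(c / Lmap a b hab x) • x, ?_⟩
    rw [map_smul, smul_eq_mul]
    field_simp
  have hrange : Module.finrank ℝ (LinearMap.range (Lmap a b hab)) = 1 := by
    rw [LinearMap.range_eq_top.mpr hsurj]
    simpa using finrank_top ℝ ℝ
  have hr := LinearMap.finrank_range_add_finrank_ker (Lmap a b hab)
  rw [hrange] at hr
  rw [Module.finrank_pi ℝ] at hr
  omega

end

section
variable {m : ℕ} {a b : Fin m → Fin (2*m)}

lemma Pr_ne_sPair_a (hab : ∀ l q, a l ≠ b q) {l' q' l1 q1 : Fin m} (hne : a l1 ≠ a q1) :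
    Pr a b hab l' q' ≠ sPair (a l1) (a q1) hne := by
  intro h
  have hv := congrArg Subtype.val h
  unfold Pr sPair at hv
  split_ifs at hv <;> rw [Prod.mk.injEq] at hv <;> obtain ⟨e1, e2⟩ := hv <;>
    first | exact hab _ _ e1.symm | exact hab _ _ e2.symm

lemma Pr_ne_sPair_b (hab : ∀ l q, a l ≠ b q) {l' q' l1 q1 : Fin m} (hne : b l1 ≠ b q1) :
    Pr a b hab l' q' ≠ sPair (b l1) (b q1) hne := by
  intro h
  have hv := congrArg Subtype.val h
  unfold Pr sPair at hv
  split_ifs at hv <;> rw [Prod.mk.injEq] at hv <;> obtain ⟨e1, e2⟩ := hv <;>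
    first | exact hab _ _ e1 | exact hab _ _ e2

lemma sPair_a_ne_b (hab : ∀ l q, a l ≠ b q) {l1 q1 l2 q2 : Fin m}
    (h1 : a l1 ≠ a q1) (h2 : b l2 ≠ b q2) :
    sPair (a l1) (a q1) h1 ≠ sPair (b l2) (b q2) h2 := by
  intro h
  have hv := congrArg Subtype.val h
  unfold sPair at hv
  split_ifs at hv <;> rw [Prod.mk.injEq] at hv <;> obtain ⟨e1, e2⟩ := hv <;>
    first | exact hab _ _ e1 | exact hab _ _ e2

lemma sPair_a_inj (ha : Function.Injective a) {l1 q1 l2 q2 : Fin m}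
    (hlt1 : l1 < q1) (hlt2 : l2 < q2) {h1 : a l1 ≠ a q1} {h2 : a l2 ≠ a q2}
    (heq : sPair (a l1) (a q1) h1 = sPair (a l2) (a q2) h2) : l1 = l2 ∧ q1 = q2 := by
  have hv := congrArg Subtype.val heq
  unfold sPair at hv
  split_ifs at hv <;> rw [Prod.mk.injEq] at hv <;> obtain ⟨e1, e2⟩ := hv <;>
    first
      | exact ⟨ha e1, ha e2⟩
      | exact ⟨ha e2, ha e1⟩
      | (exfalso; have x1 := ha e1; have x2 := ha e2;
         rw [Fin.ext_iff] at x1 x2; rw [Fin.lt_def] at hlt1 hlt2; omega)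

lemma sPair_b_inj (hb : Function.Injective b) {l1 q1 l2 q2 : Fin m}
    (hlt1 : l1 < q1) (hlt2 : l2 < q2) {h1 : b l1 ≠ b q1} {h2 : b l2 ≠ b q2}
    (heq : sPair (b l1) (b q1) h1 = sPair (b l2) (b q2) h2) : l1 = l2 ∧ q1 = q2 := by
  have hv := congrArg Subtype.val heq
  unfold sPair at hv
  split_ifs at hv <;> rw [Prod.mk.injEq] at hv <;> obtain ⟨e1, e2⟩ := hv <;>
    first
      | exact ⟨hb e1, hb e2⟩
      | exact ⟨hb e2, hb e1⟩
      | (exfalso; have x1 := hb e1; have x2 := hb e2;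
         rw [Fin.ext_iff] at x1 x2; rw [Fin.lt_def] at hlt1 hlt2; omega)

lemma aa_diff (hm : 3 ≤ m) (ha : Function.Injective a) (hb : Function.Injective b)
    (hab : ∀ l q, a l ≠ b q) (hcov : ∀ u : Fin (2*m), (∃ l, u = a l) ∨ (∃ l, u = b l))
    {l1 q1 : Fin m} (hne : l1 ≠ q1) :
    ∃ ε : ℝ, ε ≠ 0 ∧
      proj (chi (rel (rk a b (fSa (pick hm l1 q1) l1 q1 false) (gA (pick hm l1 q1)))))
        - proj (chi (rel (rk a b (fSa (pick hm l1 q1) l1 q1 true) (gA (pick hm l1 q1)))))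
      = fun p => if p = sPair (a l1) (a q1) (fun h => hne (ha h)) then ε else 0 := by
  obtain ⟨hp1, hp2⟩ := pick_ne hm l1 q1
  set l0 := pick hm l1 q1
  apply swap_proj
  · rw [rk_a ha hab, rk_a ha hab]
    simp [fSa, Ne.symm hp1, Ne.symm hp2, hne, Ne.symm hne]
  · rw [rk_a ha hab, rk_a ha hab]
    simp [fSa, Ne.symm hp1, Ne.symm hp2, hne, Ne.symm hne]
  · rw [rk_a ha hab, rk_a ha hab]
    simp [fSa, Ne.symm hp1, Ne.symm hp2, hne, Ne.symm hne]
  · intro w hw1 hw2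
    rcases hcov w with ⟨x, rfl⟩ | ⟨y, rfl⟩
    · have hx1 : x ≠ l1 := fun e => hw1 (by rw [e])
      have hx2 : x ≠ q1 := fun e => hw2 (by rw [e])
      have hxlt := x.isLt
      simp only [rk_a ha hab, fSa]
      simp only [if_neg hx1, if_neg hx2, if_neg (Ne.symm hp1), if_neg (Ne.symm hne),
        if_pos rfl, Bool.false_eq_true, if_false]
      split_ifs <;> exact ⟨by trivial, by omega⟩
    · have hylt := y.isLt
      simp only [rk_b hb hab, rk_a ha hab, gA, fSa]
      simp only [if_neg (Ne.symm hp1), if_neg (Ne.symm hne), if_pos rfl,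
        Bool.false_eq_true, if_false]
      split_ifs <;> exact ⟨by trivial, by omega⟩

lemma bb_diff (hm : 3 ≤ m) (ha : Function.Injective a) (hb : Function.Injective b)
    (hab : ∀ l q, a l ≠ b q) (hcov : ∀ u : Fin (2*m), (∃ l, u = a l) ∨ (∃ l, u = b l))
    {l1 q1 : Fin m} (hne : l1 ≠ q1) :
    ∃ ε : ℝ, ε ≠ 0 ∧
      proj (chi (rel (rk a b (fSb (pick hm l1 q1)) (gSb (pick hm l1 q1) l1 q1 false))))
        - proj (chi (rel (rk a b (fSb (pick hm l1 q1)) (gSb (pick hm l1 q1) l1 q1 true))))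
      = fun p => if p = sPair (b l1) (b q1) (fun h => hne (hb h)) then ε else 0 := by
  obtain ⟨hp1, hp2⟩ := pick_ne hm l1 q1
  set l0 := pick hm l1 q1
  apply swap_proj
  · rw [rk_b hb hab, rk_b hb hab]
    simp [gSb, Ne.symm hp1, Ne.symm hp2, hne, Ne.symm hne]
  · rw [rk_b hb hab, rk_b hb hab]
    simp [gSb, Ne.symm hp1, Ne.symm hp2, hne, Ne.symm hne]
  · rw [rk_b hb hab, rk_b hb hab]
    simp [gSb, Ne.symm hp1, Ne.symm hp2, hne, Ne.symm hne]
  · intro w hw1 hw2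
    rcases hcov w with ⟨x, rfl⟩ | ⟨y, rfl⟩
    · have hxlt := x.isLt
      simp only [rk_a ha hab, rk_b hb hab, fSb, gSb]
      simp only [if_pos rfl, Bool.false_eq_true, if_false]
      split_ifs <;> exact ⟨by trivial, by omega⟩
    · have hy1 : y ≠ l1 := fun e => hw1 (by rw [e])
      have hy2 : y ≠ q1 := fun e => hw2 (by rw [e])
      have hylt := y.isLt
      simp only [rk_b hb hab, gSb]
      simp only [if_neg hy1, if_neg hy2, if_pos rfl, Bool.false_eq_true, if_false]
      split_ifs <;> exact ⟨by trivial, by omega⟩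

end

def tightSet {m : ℕ} (a b : Fin m → Fin (2*m)) :
    Set ({p : Fin (2*m) × Fin (2*m) // p.1 < p.2} → ℝ) :=
  {y | ∃ r : Fin (2*m) → Fin (2*m) → Prop,
    IsSTO r ∧ fence a b (chi r) = 1 ∧ y = proj (chi r)}

noncomputable def uaa {m : ℕ} (hm : 3 ≤ m) (a b : Fin m → Fin (2*m))
    (j : {x : Fin m × Fin m // x.1 < x.2}) : {p : Fin (2*m) × Fin (2*m) // p.1 < p.2} → ℝ :=
  proj (chi (rel (rk a b (fSa (pick hm j.1.1 j.1.2) j.1.1 j.1.2 false) (gA (pick hm j.1.1 j.1.2)))))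
    - proj (chi (rel (rk a b (fSa (pick hm j.1.1 j.1.2) j.1.1 j.1.2 true) (gA (pick hm j.1.1 j.1.2)))))

noncomputable def ubb {m : ℕ} (hm : 3 ≤ m) (a b : Fin m → Fin (2*m))
    (j : {x : Fin m × Fin m // x.1 < x.2}) : {p : Fin (2*m) × Fin (2*m) // p.1 < p.2} → ℝ :=
  proj (chi (rel (rk a b (fSb (pick hm j.1.1 j.1.2)) (gSb (pick hm j.1.1 j.1.2) j.1.1 j.1.2 false))))
    - proj (chi (rel (rk a b (fSb (pick hm j.1.1 j.1.2)) (gSb (pick hm j.1.1 j.1.2) j.1.1 j.1.2 true))))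

noncomputable def uoff {m : ℕ} (a b : Fin m → Fin (2*m))
    (j : {x : Fin m × Fin m // x.1 ≠ x.2}) : {p : Fin (2*m) × Fin (2*m) // p.1 < p.2} → ℝ :=
  proj (chi (rel (rk a b (fB j.1.1 j.1.2) (gB j.1.1 j.1.2))))
    - proj (chi (rel (rk a b (fA j.1.1) (gA j.1.1))))

noncomputable def udiag {m : ℕ} (hm : 3 ≤ m) (a b : Fin m → Fin (2*m))
    (j : {l : Fin m // l.val ≠ 0}) : {p : Fin (2*m) × Fin (2*m) // p.1 < p.2} → ℝ :=
  proj (chi (rel (rk a b (fA j.1) (gA j.1))))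
    - proj (chi (rel (rk a b (fA (⟨0, by omega⟩ : Fin m)) (gA (⟨0, by omega⟩ : Fin m)))))

noncomputable def uAll {m : ℕ} (hm : 3 ≤ m) (a b : Fin m → Fin (2*m)) :
    ({x : Fin m × Fin m // x.1 < x.2} ⊕ {x : Fin m × Fin m // x.1 < x.2})
      ⊕ ({x : Fin m × Fin m // x.1 ≠ x.2} ⊕ {l : Fin m // l.val ≠ 0})
    → {p : Fin (2*m) × Fin (2*m) // p.1 < p.2} → ℝ :=
  Sum.elim (Sum.elim (uaa hm a b) (ubb hm a b)) (Sum.elim (uoff a b) (udiag hm a b))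

section
variable {m : ℕ} {a b : Fin m → Fin (2*m)}

-- STO facts
lemma stoA (ha : Function.Injective a) (hb : Function.Injective b)
    (hab : ∀ l q, a l ≠ b q) (hcov : ∀ u : Fin (2*m), (∃ l, u = a l) ∨ (∃ l, u = b l))
    (l0 : Fin m) : IsSTO (rel (rk a b (fA l0) (gA l0))) :=
  isSTO_rel (rk_inj ha hb hab hcov (fA_inj l0) (gA_inj l0) (fgA l0))

lemma stoB (ha : Function.Injective a) (hb : Function.Injective b)
    (hab : ∀ l q, a l ≠ b q) (hcov : ∀ u : Fin (2*m), (∃ l, u = a l) ∨ (∃ l, u = b l))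
    {l0 q0 : Fin m} (hne : l0 ≠ q0) : IsSTO (rel (rk a b (fB l0 q0) (gB l0 q0))) :=
  isSTO_rel (rk_inj ha hb hab hcov (fB_inj hne) (gB_inj hne) (fgB hne))

lemma stoSa (ha : Function.Injective a) (hb : Function.Injective b)
    (hab : ∀ l q, a l ≠ b q) (hcov : ∀ u : Fin (2*m), (∃ l, u = a l) ∨ (∃ l, u = b l))
    (l0 l1 q1 : Fin m) (s : Bool) : IsSTO (rel (rk a b (fSa l0 l1 q1 s) (gA l0))) :=
  isSTO_rel (rk_inj ha hb hab hcov (fSa_inj l0 l1 q1 s) (gA_inj l0) (fgSa l0 l1 q1 s))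

lemma stoSb (ha : Function.Injective a) (hb : Function.Injective b)
    (hab : ∀ l q, a l ≠ b q) (hcov : ∀ u : Fin (2*m), (∃ l, u = a l) ∨ (∃ l, u = b l))
    (l0 : Fin m) {l1 q1 : Fin m} (hne : l1 ≠ q1) (s : Bool) :
    IsSTO (rel (rk a b (fSb l0) (gSb l0 l1 q1 s))) :=
  isSTO_rel (rk_inj ha hb hab hcov (fSb_inj l0) (gSb_inj hne s) (fgSb s))

-- memberships in the tight set
lemma mem_uaa (hm : 3 ≤ m) (ha : Function.Injective a) (hb : Function.Injective b)
    (hab : ∀ l q, a l ≠ b q) (hcov : ∀ u : Fin (2*m), (∃ l, u = a l) ∨ (∃ l, u = b l))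
    (l0 l1 q1 : Fin m) (s : Bool) :
    proj (chi (rel (rk a b (fSa l0 l1 q1 s) (gA l0)))) ∈ tightSet a b :=
  ⟨_, stoSa ha hb hab hcov l0 l1 q1 s, fenceSa ha hb hab l0 l1 q1 s, rfl⟩

lemma mem_ubb (hm : 3 ≤ m) (ha : Function.Injective a) (hb : Function.Injective b)
    (hab : ∀ l q, a l ≠ b q) (hcov : ∀ u : Fin (2*m), (∃ l, u = a l) ∨ (∃ l, u = b l))
    {l0 l1 q1 : Fin m} (h1 : l0 ≠ l1) (h2 : l0 ≠ q1) (hne : l1 ≠ q1) (s : Bool) :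
    proj (chi (rel (rk a b (fSb l0) (gSb l0 l1 q1 s)))) ∈ tightSet a b :=
  ⟨_, stoSb ha hb hab hcov l0 hne s, fenceSb ha hb hab h1 h2 s, rfl⟩

lemma mem_uA (ha : Function.Injective a) (hb : Function.Injective b)
    (hab : ∀ l q, a l ≠ b q) (hcov : ∀ u : Fin (2*m), (∃ l, u = a l) ∨ (∃ l, u = b l))
    (l0 : Fin m) :
    proj (chi (rel (rk a b (fA l0) (gA l0)))) ∈ tightSet a b :=
  ⟨_, stoA ha hb hab hcov l0, fenceA ha hb hab l0, rfl⟩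

lemma mem_uB (ha : Function.Injective a) (hb : Function.Injective b)
    (hab : ∀ l q, a l ≠ b q) (hcov : ∀ u : Fin (2*m), (∃ l, u = a l) ∨ (∃ l, u = b l))
    {l0 q0 : Fin m} (hne : l0 ≠ q0) :
    proj (chi (rel (rk a b (fB l0 q0) (gB l0 q0)))) ∈ tightSet a b :=
  ⟨_, stoB ha hb hab hcov hne, fenceB ha hb hab hne, rfl⟩

-- values at fence coordinates
lemma val_aa (hm : 3 ≤ m) (ha : Function.Injective a) (hb : Function.Injective b)
    (hab : ∀ l q, a l ≠ b q) (hcov : ∀ u : Fin (2*m), (∃ l, u = a l) ∨ (∃ l, u = b l))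
    (j : {x : Fin m × Fin m // x.1 < x.2}) (l q : Fin m) :
    uaa hm a b j (Pr a b hab l q) = 0 := by
  obtain ⟨ε, hε, hchar⟩ := aa_diff hm ha hb hab hcov (ne_of_lt j.2)
  unfold uaa
  simp only [hchar]
  exact if_neg (Pr_ne_sPair_a hab _)

lemma val_bb (hm : 3 ≤ m) (ha : Function.Injective a) (hb : Function.Injective b)
    (hab : ∀ l q, a l ≠ b q) (hcov : ∀ u : Fin (2*m), (∃ l, u = a l) ∨ (∃ l, u = b l))
    (j : {x : Fin m × Fin m // x.1 < x.2}) (l q : Fin m) :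
    ubb hm a b j (Pr a b hab l q) = 0 := by
  obtain ⟨ε, hε, hchar⟩ := bb_diff hm ha hb hab hcov (ne_of_lt j.2)
  unfold ubb
  simp only [hchar]
  exact if_neg (Pr_ne_sPair_b hab _)

lemma val_off (ha : Function.Injective a) (hb : Function.Injective b)
    (hab : ∀ l q, a l ≠ b q) (hcov : ∀ u : Fin (2*m), (∃ l, u = a l) ∨ (∃ l, u = b l))
    (j : {x : Fin m × Fin m // x.1 ≠ x.2}) (l q : Fin m) :
    uoff a b j (Pr a b hab l q)
      = scoef a b l q *
        ((if ((l = j.1.1 ∧ q = j.1.1) ∨ (l = j.1.1 ∧ q = j.1.2) ∨ (l = j.1.2 ∧ q = j.1.2))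
            then (1:ℝ) else 0)
          - (if (l = j.1.1 ∧ q = j.1.1) then (1:ℝ) else 0)) := by
  unfold uoff
  rw [Pi.sub_apply]
  have h := proj_sub_Pr hab (stoB ha hb hab hcov j.2) (stoA ha hb hab hcov j.1.1) l q
  rw [h, chi_rel_ab ha hb hab, chi_rel_ab ha hb hab]
  rw [if_congr (ltB j.2 l q) rfl rfl, if_congr (ltA j.1.1 l q) rfl rfl]
  rfl

lemma val_diag (hm : 3 ≤ m) (ha : Function.Injective a) (hb : Function.Injective b)
    (hab : ∀ l q, a l ≠ b q) (hcov : ∀ u : Fin (2*m), (∃ l, u = a l) ∨ (∃ l, u = b l))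
    (j : {l : Fin m // l.val ≠ 0}) (l q : Fin m) :
    udiag hm a b j (Pr a b hab l q)
      = scoef a b l q *
        ((if (l = j.1 ∧ q = j.1) then (1:ℝ) else 0)
          - (if (l = (⟨0, by omega⟩ : Fin m) ∧ q = (⟨0, by omega⟩ : Fin m)) then (1:ℝ) else 0)) := by
  unfold udiag
  rw [Pi.sub_apply]
  have h := proj_sub_Pr hab (stoA ha hb hab hcov j.1) (stoA ha hb hab hcov ⟨0, by omega⟩) l q
  rw [h, chi_rel_ab ha hb hab, chi_rel_ab ha hb hab]
  rw [if_congr (ltA j.1 l q) rfl rfl, if_congr (ltA ⟨0, by omega⟩ l q) rfl rfl]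
  rfl

lemma scoef_ne_zero (l q : Fin m) : scoef a b l q ≠ 0 := by
  unfold scoef; split_ifs <;> norm_num

end
lemma card_pairs (k : ℕ) : Fintype.card {p : Fin k × Fin k // p.1 < p.2} = k*(k-1)/2 := by
  classical
  rw [Fintype.card_subtype]
  have h1 : (Finset.univ.filter fun p : Fin k × Fin k => p.1 < p.2).card
      = ∑ i : Fin k, (k - 1 - i.val) := by
    rw [Finset.card_filter]
    rw [Fintype.sum_prod_type]
    refine Finset.sum_congr rfl fun i _ => ?_
    have : (∑ j : Fin k, if i < j then 1 else 0) = (Finset.univ.filter fun j : Fin k => i < j).card := by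
      rw [Finset.card_filter]
    rw [this]
    have : (Finset.univ.filter fun j : Fin k => i < j) = Finset.Ioi i := by
      ext j; simp
    rw [this, Fin.card_Ioi]
  rw [h1]
  rw [Fin.sum_univ_eq_sum_range]
  have h3 : ∑ i ∈ Finset.range k, (k - 1 - i) = ∑ i ∈ Finset.range k, i := by
    have := Finset.sum_range_reflect (fun j => j) k
    calc ∑ i ∈ Finset.range k, (k - 1 - i) = ∑ i ∈ Finset.range k, (fun j => j) (k - 1 - i) := rfl
    _ = ∑ i ∈ Finset.range k, i := this
  rw [h3]
  have := Finset.sum_range_id_mul_two k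
  omega

section
variable {m : ℕ} {a b : Fin m → Fin (2*m)}

lemma val_off' (ha : Function.Injective a) (hb : Function.Injective b)
    (hab : ∀ l q, a l ≠ b q) (hcov : ∀ u : Fin (2*m), (∃ l, u = a l) ∨ (∃ l, u = b l))
    (l' q' : Fin m) (hne : l' ≠ q') (l q : Fin m) :
    uoff a b ⟨(l', q'), hne⟩ (Pr a b hab l q)
      = scoef a b l q *
        ((if ((l = l' ∧ q = l') ∨ (l = l' ∧ q = q') ∨ (l = q' ∧ q = q'))
            then (1:ℝ) else 0)
          - (if (l = l' ∧ q = l') then (1:ℝ) else 0)) :=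
  val_off ha hb hab hcov ⟨(l', q'), hne⟩ l q

lemma val_diag' (hm : 3 ≤ m) (ha : Function.Injective a) (hb : Function.Injective b)
    (hab : ∀ l q, a l ≠ b q) (hcov : ∀ u : Fin (2*m), (∃ l, u = a l) ∨ (∃ l, u = b l))
    (lh : Fin m) (hlh : lh.val ≠ 0) (l q : Fin m) :
    udiag hm a b ⟨lh, hlh⟩ (Pr a b hab l q)
      = scoef a b l q *
        ((if (l = lh ∧ q = lh) then (1:ℝ) else 0)
          - (if (l = (⟨0, by omega⟩ : Fin m) ∧ q = (⟨0, by omega⟩ : Fin m)) then (1:ℝ) else 0)) :=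
  val_diag hm ha hb hab hcov ⟨lh, hlh⟩ l q

lemma indep (hm : 3 ≤ m) (ha : Function.Injective a) (hb : Function.Injective b)
    (hab : ∀ l q, a l ≠ b q) (hcov : ∀ u : Fin (2*m), (∃ l, u = a l) ∨ (∃ l, u = b l)) :
    LinearIndependent ℝ (uAll hm a b) := by
  classical
  rw [Fintype.linearIndependent_iff]
  intro g hg
  have hgp : ∀ p,
      (∑ x : {x : Fin m × Fin m // x.1 < x.2}, g (Sum.inl (Sum.inl x)) * uaa hm a b x p)
      + (∑ x : {x : Fin m × Fin m // x.1 < x.2}, g (Sum.inl (Sum.inr x)) * ubb hm a b x p)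
      + ((∑ x : {x : Fin m × Fin m // x.1 ≠ x.2}, g (Sum.inr (Sum.inl x)) * uoff a b x p)
      + (∑ x : {l : Fin m // l.val ≠ 0}, g (Sum.inr (Sum.inr x)) * udiag hm a b x p)) = 0 := by
    intro p
    have h := congrFun hg p
    simpa only [Finset.sum_apply, Pi.smul_apply, smul_eq_mul, Fintype.sum_sum_type,
      uAll, Sum.elim_inl, Sum.elim_inr, Pi.zero_apply] using h
  -- Step 1 : off-diagonal coefficients vanish
  have hoff : ∀ x : {x : Fin m × Fin m // x.1 ≠ x.2}, g (Sum.inr (Sum.inl x)) = 0 := by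
    rintro ⟨⟨l, q⟩, hlq⟩
    have hlq' : l ≠ q := hlq
    have h0 := hgp (Pr a b hab l q)
    have eA : (∑ x : {x : Fin m × Fin m // x.1 < x.2},
        g (Sum.inl (Sum.inl x)) * uaa hm a b x (Pr a b hab l q)) = 0 :=
      Finset.sum_eq_zero fun x _ => by rw [val_aa hm ha hb hab hcov]; ring
    have eB : (∑ x : {x : Fin m × Fin m // x.1 < x.2},
        g (Sum.inl (Sum.inr x)) * ubb hm a b x (Pr a b hab l q)) = 0 :=
      Finset.sum_eq_zero fun x _ => by rw [val_bb hm ha hb hab hcov]; ring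
    have eD : (∑ x : {l : Fin m // l.val ≠ 0},
        g (Sum.inr (Sum.inr x)) * udiag hm a b x (Pr a b hab l q)) = 0 := by
      refine Finset.sum_eq_zero fun x _ => ?_
      rw [val_diag hm ha hb hab hcov]
      rw [if_neg (fun hc : l = x.1 ∧ q = x.1 => hlq' (hc.1.trans hc.2.symm)),
        if_neg (fun hc : l = ⟨0, by omega⟩ ∧ q = ⟨0, by omega⟩ =>
          hlq' (hc.1.trans hc.2.symm))]
      ring
    have eC : (∑ x : {x : Fin m × Fin m // x.1 ≠ x.2},
        g (Sum.inr (Sum.inl x)) * uoff a b x (Pr a b hab l q))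
        = g (Sum.inr (Sum.inl ⟨(l, q), hlq⟩)) * scoef a b l q := by
      have e1 : ∀ x ∈ (Finset.univ : Finset {x : Fin m × Fin m // x.1 ≠ x.2}),
          x ≠ ⟨(l, q), hlq⟩ →
          g (Sum.inr (Sum.inl x)) * uoff a b x (Pr a b hab l q) = 0 := by
        intro x _ hxne
        rw [val_off ha hb hab hcov]
        have hne' : ¬(l = x.1.1 ∧ q = x.1.2) := fun hc =>
          hxne (Subtype.ext (Prod.ext hc.1.symm hc.2.symm))
        have hQ : ¬(l = x.1.1 ∧ q = x.1.1) := fun hc => hlq' (hc.1.trans hc.2.symm)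
        have hP : ¬((l = x.1.1 ∧ q = x.1.1) ∨ (l = x.1.1 ∧ q = x.1.2)
            ∨ (l = x.1.2 ∧ q = x.1.2)) := by
          rintro (⟨d1, d2⟩ | ⟨d1, d2⟩ | ⟨d1, d2⟩)
          · exact hlq' (d1.trans d2.symm)
          · exact hne' ⟨d1, d2⟩
          · exact hlq' (d1.trans d2.symm)
        rw [if_neg hP, if_neg hQ]
        ring
      have e2 : (⟨(l, q), hlq⟩ : {x : Fin m × Fin m // x.1 ≠ x.2}) ∉
          (Finset.univ : Finset {x : Fin m × Fin m // x.1 ≠ x.2}) →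
          g (Sum.inr (Sum.inl ⟨(l, q), hlq⟩)) * uoff a b ⟨(l, q), hlq⟩ (Pr a b hab l q) = 0 :=
        fun h => absurd (Finset.mem_univ _) h
      rw [Finset.sum_eq_single _ e1 e2]
      rw [val_off' ha hb hab hcov l q hlq]
      rw [if_pos (Or.inr (Or.inl ⟨rfl, rfl⟩)),
        if_neg (fun hc : l = l ∧ q = l => hlq' hc.2.symm)]
      ring
    rw [eA, eB, eC, eD] at h0
    simp only [zero_add, add_zero] at h0
    rcases mul_eq_zero.mp h0 with h | h
    · exact h
    · exact absurd h (scoef_ne_zero l q)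
  -- Step 2 : diagonal coefficients vanish
  have hdiag : ∀ x : {l : Fin m // l.val ≠ 0}, g (Sum.inr (Sum.inr x)) = 0 := by
    rintro ⟨lh, hlh⟩
    have h0 := hgp (Pr a b hab lh lh)
    have eA : (∑ x : {x : Fin m × Fin m // x.1 < x.2},
        g (Sum.inl (Sum.inl x)) * uaa hm a b x (Pr a b hab lh lh)) = 0 :=
      Finset.sum_eq_zero fun x _ => by rw [val_aa hm ha hb hab hcov]; ring
    have eB : (∑ x : {x : Fin m × Fin m // x.1 < x.2},
        g (Sum.inl (Sum.inr x)) * ubb hm a b x (Pr a b hab lh lh)) = 0 :=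
      Finset.sum_eq_zero fun x _ => by rw [val_bb hm ha hb hab hcov]; ring
    have eC : (∑ x : {x : Fin m × Fin m // x.1 ≠ x.2},
        g (Sum.inr (Sum.inl x)) * uoff a b x (Pr a b hab lh lh)) = 0 :=
      Finset.sum_eq_zero fun x _ => by rw [hoff x]; ring
    have eD : (∑ x : {l : Fin m // l.val ≠ 0},
        g (Sum.inr (Sum.inr x)) * udiag hm a b x (Pr a b hab lh lh))
        = g (Sum.inr (Sum.inr ⟨lh, hlh⟩)) * scoef a b lh lh := by
      have e1 : ∀ x ∈ (Finset.univ : Finset {l : Fin m // l.val ≠ 0}),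
          x ≠ ⟨lh, hlh⟩ →
          g (Sum.inr (Sum.inr x)) * udiag hm a b x (Pr a b hab lh lh) = 0 := by
        intro x _ hxne
        rw [val_diag hm ha hb hab hcov]
        rw [if_neg (fun hc : lh = x.1 ∧ lh = x.1 => hxne (Subtype.ext hc.1.symm)),
          if_neg (fun hc : lh = ⟨0, by omega⟩ ∧ lh = ⟨0, by omega⟩ =>
            hlh (congrArg Fin.val hc.1))]
        ring
      have e2 : (⟨lh, hlh⟩ : {l : Fin m // l.val ≠ 0}) ∉
          (Finset.univ : Finset {l : Fin m // l.val ≠ 0}) →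
          g (Sum.inr (Sum.inr ⟨lh, hlh⟩)) * udiag hm a b ⟨lh, hlh⟩ (Pr a b hab lh lh) = 0 :=
        fun h => absurd (Finset.mem_univ _) h
      rw [Finset.sum_eq_single _ e1 e2]
      rw [val_diag' hm ha hb hab hcov lh hlh]
      rw [if_pos ⟨rfl, rfl⟩,
        if_neg (fun hc : lh = ⟨0, by omega⟩ ∧ lh = ⟨0, by omega⟩ =>
          hlh (congrArg Fin.val hc.1))]
      ring
    rw [eA, eB, eC, eD] at h0
    simp only [zero_add, add_zero] at h0
    rcases mul_eq_zero.mp h0 with h | h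
    · exact h
    · exact absurd h (scoef_ne_zero lh lh)
  -- Step 3 : aa coefficients vanish
  have haa : ∀ x : {x : Fin m × Fin m // x.1 < x.2}, g (Sum.inl (Sum.inl x)) = 0 := by
    intro j
    obtain ⟨ε, hε, hchar⟩ := aa_diff hm ha hb hab hcov (ne_of_lt j.2)
    have h0 := hgp (sPair (a j.1.1) (a j.1.2) (fun h => (ne_of_lt j.2) (ha h)))
    set p0 := sPair (a j.1.1) (a j.1.2) (fun h => (ne_of_lt j.2) (ha h)) with hp0
    have eA : (∑ x : {x : Fin m × Fin m // x.1 < x.2},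
        g (Sum.inl (Sum.inl x)) * uaa hm a b x p0) = g (Sum.inl (Sum.inl j)) * ε := by
      have e1 : ∀ x ∈ (Finset.univ : Finset {x : Fin m × Fin m // x.1 < x.2}),
          x ≠ j → g (Sum.inl (Sum.inl x)) * uaa hm a b x p0 = 0 := by
        intro x _ hxne
        obtain ⟨ε', hε', hchar'⟩ := aa_diff hm ha hb hab hcov (ne_of_lt x.2)
        have hval : uaa hm a b x p0 = 0 := by
          unfold uaa
          simp only [hchar']
          refine if_neg fun hc => ?_
          obtain ⟨e1', e2'⟩ := sPair_a_inj ha j.2 x.2 hc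
          exact hxne (Subtype.ext (Prod.ext e1'.symm e2'.symm))
        rw [hval]; ring
      have e2 : j ∉ (Finset.univ : Finset {x : Fin m × Fin m // x.1 < x.2}) →
          g (Sum.inl (Sum.inl j)) * uaa hm a b j p0 = 0 :=
        fun h => absurd (Finset.mem_univ _) h
      rw [Finset.sum_eq_single _ e1 e2]
      have hval : uaa hm a b j p0 = ε := by
        unfold uaa
        simp only [hchar]
        simp
      rw [hval]
    have eB : (∑ x : {x : Fin m × Fin m // x.1 < x.2},
        g (Sum.inl (Sum.inr x)) * ubb hm a b x p0) = 0 := by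
      refine Finset.sum_eq_zero fun x _ => ?_
      obtain ⟨ε', hε', hchar'⟩ := bb_diff hm ha hb hab hcov (ne_of_lt x.2)
      have hval : ubb hm a b x p0 = 0 := by
        unfold ubb
        simp only [hchar']
        exact if_neg fun hc => sPair_a_ne_b hab _ _ hc
      rw [hval]; ring
    have eC : (∑ x : {x : Fin m × Fin m // x.1 ≠ x.2},
        g (Sum.inr (Sum.inl x)) * uoff a b x p0) = 0 :=
      Finset.sum_eq_zero fun x _ => by rw [hoff x]; ring
    have eD : (∑ x : {l : Fin m // l.val ≠ 0},
        g (Sum.inr (Sum.inr x)) * udiag hm a b x p0) = 0 :=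
      Finset.sum_eq_zero fun x _ => by rw [hdiag x]; ring
    rw [eA, eB, eC, eD] at h0
    simp only [zero_add, add_zero] at h0
    rcases mul_eq_zero.mp h0 with h | h
    · exact h
    · exact absurd h hε
  -- Step 4 : bb coefficients vanish
  have hbb : ∀ x : {x : Fin m × Fin m // x.1 < x.2}, g (Sum.inl (Sum.inr x)) = 0 := by
    intro j
    obtain ⟨ε, hε, hchar⟩ := bb_diff hm ha hb hab hcov (ne_of_lt j.2)
    have h0 := hgp (sPair (b j.1.1) (b j.1.2) (fun h => (ne_of_lt j.2) (hb h)))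
    set p0 := sPair (b j.1.1) (b j.1.2) (fun h => (ne_of_lt j.2) (hb h)) with hp0
    have eA : (∑ x : {x : Fin m × Fin m // x.1 < x.2},
        g (Sum.inl (Sum.inl x)) * uaa hm a b x p0) = 0 := by
      refine Finset.sum_eq_zero fun x _ => ?_
      obtain ⟨ε', hε', hchar'⟩ := aa_diff hm ha hb hab hcov (ne_of_lt x.2)
      have hval : uaa hm a b x p0 = 0 := by
        unfold uaa
        simp only [hchar']
        exact if_neg fun hc => sPair_a_ne_b hab _ _ hc.symm
      rw [hval]; ring
    have eB : (∑ x : {x : Fin m × Fin m // x.1 < x.2},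
        g (Sum.inl (Sum.inr x)) * ubb hm a b x p0) = g (Sum.inl (Sum.inr j)) * ε := by
      have e1 : ∀ x ∈ (Finset.univ : Finset {x : Fin m × Fin m // x.1 < x.2}),
          x ≠ j → g (Sum.inl (Sum.inr x)) * ubb hm a b x p0 = 0 := by
        intro x _ hxne
        obtain ⟨ε', hε', hchar'⟩ := bb_diff hm ha hb hab hcov (ne_of_lt x.2)
        have hval : ubb hm a b x p0 = 0 := by
          unfold ubb
          simp only [hchar']
          refine if_neg fun hc => ?_
          obtain ⟨e1', e2'⟩ := sPair_b_inj hb j.2 x.2 hc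
          exact hxne (Subtype.ext (Prod.ext e1'.symm e2'.symm))
        rw [hval]; ring
      have e2 : j ∉ (Finset.univ : Finset {x : Fin m × Fin m // x.1 < x.2}) →
          g (Sum.inl (Sum.inr j)) * ubb hm a b j p0 = 0 :=
        fun h => absurd (Finset.mem_univ _) h
      rw [Finset.sum_eq_single _ e1 e2]
      have hval : ubb hm a b j p0 = ε := by
        unfold ubb
        simp only [hchar]
        simp
      rw [hval]
    have eC : (∑ x : {x : Fin m × Fin m // x.1 ≠ x.2},
        g (Sum.inr (Sum.inl x)) * uoff a b x p0) = 0 :=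
      Finset.sum_eq_zero fun x _ => by rw [hoff x]; ring
    have eD : (∑ x : {l : Fin m // l.val ≠ 0},
        g (Sum.inr (Sum.inr x)) * udiag hm a b x p0) = 0 :=
      Finset.sum_eq_zero fun x _ => by rw [hdiag x]; ring
    rw [eA, eB, eC, eD] at h0
    simp only [zero_add, add_zero] at h0
    rcases mul_eq_zero.mp h0 with h | h
    · exact h
    · exact absurd h hε
  rintro ((j | j) | (j | j))
  · exact haa j
  · exact hbb j
  · exact hoff j
  · exact hdiag j

end

lemma card_diag_eq (m : ℕ) : Fintype.card {x : Fin m × Fin m // x.1 = x.2} = m := by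
  classical
  have e : {x : Fin m × Fin m // x.1 = x.2} ≃ Fin m :=
    ⟨fun x => x.1.1, fun l => ⟨(l, l), rfl⟩,
      fun x => by
        obtain ⟨⟨i, j⟩, h⟩ := x
        exact Subtype.ext (Prod.ext rfl h),
      fun l => rfl⟩
  rw [Fintype.card_congr e, Fintype.card_fin]

lemma card_ne_pairs (m : ℕ) : Fintype.card {x : Fin m × Fin m // x.1 ≠ x.2} = m*m - m := by
  classical
  have h := Fintype.card_subtype_compl (fun x : Fin m × Fin m => x.1 = x.2)
  have h2 : Fintype.card {x : Fin m × Fin m // ¬ x.1 = x.2}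
      = Fintype.card {x : Fin m × Fin m // x.1 ≠ x.2} := rfl
  rw [h2] at h
  rw [h, card_diag_eq, Fintype.card_prod, Fintype.card_fin]

lemma card_nonzero_fin {m : ℕ} (hm : 3 ≤ m) :
    Fintype.card {l : Fin m // l.val ≠ 0} = m - 1 := by
  classical
  have h1 : Fintype.card {l : Fin m // l.val = 0} = 1 := by
    have e : {l : Fin m // l.val = 0} ≃ Unit :=
      ⟨fun _ => Unit.unit, fun _ => ⟨⟨0, by omega⟩, rfl⟩,
        fun x => by
          obtain ⟨l, hl⟩ := x
          exact Subtype.ext (Fin.ext hl.symm),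
        fun u => rfl⟩
    rw [Fintype.card_congr e]
    exact Fintype.card_unit
  have h := Fintype.card_subtype_compl (fun l : Fin m => l.val = 0)
  have h2 : Fintype.card {l : Fin m // ¬ l.val = 0}
      = Fintype.card {l : Fin m // l.val ≠ 0} := rfl
  rw [h2] at h
  rw [h, h1, Fintype.card_fin]


theorem fence_is_facet {m : ℕ} (hm : 3 ≤ m)
    (a b : Fin m → Fin (2 * m))
    (ha : Function.Injective a) (hb : Function.Injective b)
    (hab : ∀ l q, a l ≠ b q)
    (hcov : ∀ u : Fin (2 * m), (∃ l, u = a l) ∨ (∃ l, u = b l)) :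
    (∀ r : Fin (2 * m) → Fin (2 * m) → Prop, IsSTO r → fence a b (chi r) ≤ 1) ∧
    Module.finrank ℝ
      (affineSpan ℝ
        {y : {p : Fin (2 * m) × Fin (2 * m) // p.1 < p.2} → ℝ |
          ∃ r : Fin (2 * m) → Fin (2 * m) → Prop,
            IsSTO r ∧ fence a b (chi r) = 1 ∧ y = proj (chi r)}).direction
      = (2 * m) * (2 * m - 1) / 2 - 1 := by
  classical
  constructor
  · intro r hr; exact fence_le_one a b hab hr
  rw [direction_affineSpan]
  have hset : {y : {p : Fin (2 * m) × Fin (2 * m) // p.1 < p.2} → ℝ |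
      ∃ r : Fin (2 * m) → Fin (2 * m) → Prop,
        IsSTO r ∧ fence a b (chi r) = 1 ∧ y = proj (chi r)} = tightSet a b := rfl
  rw [hset]
  have hL : ∀ y ∈ tightSet a b,
      Lmap a b hab y = 1 - ∑ l, ∑ q, tcoef l q * kcoef a b l q := by
    rintro y ⟨r, hr, hf, rfl⟩
    rw [Lmap_chi hab hr, hf]
  have hupper : vectorSpan ℝ (tightSet a b) ≤ LinearMap.ker (Lmap a b hab) := by
    rw [vectorSpan_def]
    apply Submodule.span_le.mpr
    rintro v hv
    rw [Set.mem_vsub] at hv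
    obtain ⟨y1, hy1, y2, hy2, rfl⟩ := hv
    rw [SetLike.mem_coe, LinearMap.mem_ker, vsub_eq_sub, map_sub, hL y1 hy1, hL y2 hy2]
    ring
  have hker := finrank_ker_Lmap hm ha hb hab
  have hle : Module.finrank ℝ (vectorSpan ℝ (tightSet a b))
      ≤ Fintype.card {p : Fin (2*m) × Fin (2*m) // p.1 < p.2} - 1 :=
    le_trans (Submodule.finrank_mono hupper) (le_of_eq hker)
  -- lower bound
  have hmem : ∀ i, uAll hm a b i ∈ vectorSpan ℝ (tightSet a b) := by
    rintro ((⟨⟨l1, q1⟩, hj⟩ | ⟨⟨l1, q1⟩, hj⟩) | (⟨⟨l', q'⟩, hj⟩ | ⟨lh, hj⟩))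
    · have h := vsub_mem_vectorSpan ℝ
        (mem_uaa hm ha hb hab hcov (pick hm l1 q1) l1 q1 false)
        (mem_uaa hm ha hb hab hcov (pick hm l1 q1) l1 q1 true)
      exact h
    · have h := vsub_mem_vectorSpan ℝ
        (mem_ubb hm ha hb hab hcov (pick_ne hm l1 q1).1 (pick_ne hm l1 q1).2
          (ne_of_lt hj) false)
        (mem_ubb hm ha hb hab hcov (pick_ne hm l1 q1).1 (pick_ne hm l1 q1).2
          (ne_of_lt hj) true)
      exact h
    · have h := vsub_mem_vectorSpan ℝ
        (mem_uB ha hb hab hcov hj)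
        (mem_uA ha hb hab hcov l')
      exact h
    · have h := vsub_mem_vectorSpan ℝ
        (mem_uA ha hb hab hcov lh)
        (mem_uA ha hb hab hcov ⟨0, by omega⟩)
      exact h
  have hliW : LinearIndependent ℝ
      (fun i => (⟨uAll hm a b i, hmem i⟩ : vectorSpan ℝ (tightSet a b))) := by
    apply LinearIndependent.of_comp (vectorSpan ℝ (tightSet a b)).subtype
    exact indep hm ha hb hab hcov
  have hge := hliW.fintype_card_le_finrank
  rw [Fintype.card_sum, Fintype.card_sum, Fintype.card_sum] at hge
  rw [card_pairs m, card_ne_pairs m, card_nonzero_fin hm] at hge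
  -- arithmetic
  have hCe : m*(m-1)/2 * 2 = m*(m-1) := by
    apply Nat.div_mul_cancel
    apply Even.two_dvd
    have h := Nat.even_mul_succ_self (m - 1)
    have h2 : (m - 1) * (m - 1 + 1) = m * (m - 1) := by
      have : m - 1 + 1 = m := by omega
      rw [this, Nat.mul_comm]
    rwa [h2] at h
  have e1 : m*(m-1) = m*m - m := by
    have h1 : (1:ℕ) ≤ m := by omega
    have h2 : m ≤ m*m := Nat.le_mul_of_pos_left m (by omega)
    zify [h1, h2]
    ring
  have e2 : m*(2*m-1) = 2*(m*m) - m := by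
    have h1 : (1:ℕ) ≤ 2*m := by omega
    have h2 : m ≤ 2*(m*m) := by nlinarith
    zify [h1, h2]
    ring
  have hPT : Fintype.card {p : Fin (2*m) × Fin (2*m) // p.1 < p.2} = 2*m*(2*m-1)/2 :=
    card_pairs (2*m)
  have hPT2 : 2*m*(2*m-1)/2 = m*(2*m-1) := by
    rw [show 2*m*(2*m-1) = 2*(m*(2*m-1)) by ring]
    exact Nat.mul_div_cancel_left _ (by norm_num)
  have hcards : m*(m-1)/2 + m*(m-1)/2 + (m*m - m + (m - 1))
      = Fintype.card {p : Fin (2*m) × Fin (2*m) // p.1 < p.2} - 1 := by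
    rw [hPT, hPT2, e2]
    omega
  rw [hcards] at hge
  have hfinal : Module.finrank ℝ (vectorSpan ℝ (tightSet a b))
      = Fintype.card {p : Fin (2*m) × Fin (2*m) // p.1 < p.2} - 1 :=
    le_antisymm hle hge
  rw [hfinal, hPT]
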